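/- Let k be a field of characteristic zero, r ≥ 0 an integer, and f_0, …, f_r ∈ k⟦t⟧ nonzero formal power series whose orders s_i = ord(f_i) satisfy s_0 < s_1 < ⋯ < s_r. Then the Wronskian Wr(f_0,…,f_r) = det( ((d/dt)^j f_i)_{0 ≤ i,j ≤ r} ) is nonzero and its order equals s_0 + s_1 + ⋯ + s_r − r(r+1)/2. -/

import Mathlib

/-- The Wronskian of the power series `f_0, …, f_r`: the determinant of the
`(r+1) × (r+1)` matrix whose `(i,j)` entry is the `j`-th formal derivative of
`f_i`. -/
noncomputable def psWronskian {k : Type*} [CommRing k] (r : ℕ)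
    (f : Fin (r + 1) → PowerSeries k) : PowerSeries k :=
  (Matrix.of fun i j : Fin (r + 1) =>
    (PowerSeries.derivativeFun)^[(j : ℕ)] (f i)).det

open PowerSeries Finset

lemma coeff_derivativeFun_iterate {k : Type*} [CommRing k] (f : PowerSeries k) (j m : ℕ) :
    PowerSeries.coeff (R := k) m (PowerSeries.derivativeFun^[j] f)
      = ((m + j).descFactorial j : k) * PowerSeries.coeff (R := k) (m + j) f := by
  induction j generalizing m with
  | zero => simp
  | succ j ih =>
    rw [Function.iterate_succ_apply',
      show ∀ g : PowerSeries k, derivativeFun g = PowerSeries.derivative k g from fun _ => rfl,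
      PowerSeries.coeff_derivativeFun, ih (m + 1)]
    have h1 : m + 1 + j = m + (j + 1) := by ring
    have h2 : (m + (j + 1)).descFactorial (j + 1)
        = (m + 1) * (m + (j + 1)).descFactorial j := by
      rw [Nat.descFactorial_succ]; congr 1; omega
    rw [h1, h2]; push_cast; ring

set_option maxHeartbeats 2000000 in
/-- Over a field of characteristic zero, if `f_0, …, f_r` are
nonzero power series with strictly increasing orders `s_0 < s_1 < ⋯ < s_r`,
then their Wronskian is nonzero and has order `s_0 + ⋯ + s_r - r(r+1)/2`
(stated additively: `ord(Wr) + r(r+1)/2 = s_0 + ⋯ + s_r`). -/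
theorem statement_8 {k : Type*} [Field k] [CharZero k] (r : ℕ)
    (f : Fin (r + 1) → PowerSeries k) (s : Fin (r + 1) → ℕ)
    (hf : ∀ i, f i ≠ 0) (hord : ∀ i, (f i).order = (s i : ℕ∞))
    (hs : StrictMono s) :
    psWronskian r f ≠ 0 ∧
      (psWronskian r f).order + ((r * (r + 1) / 2 : ℕ) : ℕ∞)
        = ((∑ i, s i : ℕ) : ℕ∞) := by
  classical
  set T : ℕ := r * (r + 1) / 2 with hTdef
  have hT' : (∑ i : Fin (r + 1), (i : ℕ)) = T := by
    rw [Fin.sum_univ_eq_sum_range (fun i => i) (r + 1), Finset.sum_range_id,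
      Nat.add_sub_cancel, Nat.mul_comm]
  have hsi : ∀ i : Fin (r + 1), (i : ℕ) ≤ s i := by
    intro i
    induction i using Fin.induction with
    | zero => exact Nat.zero_le _
    | succ j ih =>
      have h := hs (show j.castSucc < j.succ from Fin.castSucc_lt_succ)
      simp only [Fin.coe_castSucc] at ih
      simp only [Fin.val_succ]
      omega
  have hTS : T ≤ ∑ i, s i := by
    rw [← hT']
    exact Finset.sum_le_sum fun i _ => hsi i
  set N : ℕ := (∑ i, s i) - T with hNdef
  have hNT : N + T = ∑ i, s i := Nat.sub_add_cancel hTS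
  have ha : ∀ i, PowerSeries.coeff (R := k) (s i) (f i) ≠ 0 := fun i =>
    (PowerSeries.order_eq_nat.mp (hord i)).1
  -- core vanishing lemma
  have core : ∀ (σ : Equiv.Perm (Fin (r + 1))) (n : ℕ), n ≤ N →
      ∀ l : Fin (r + 1) →₀ ℕ, l ∈ finsuppAntidiag (univ : Finset (Fin (r + 1))) n →
      (∏ i, PowerSeries.coeff (R := k) (l i) ((derivativeFun)^[(i : ℕ)] (f (σ i)))) ≠ 0 →
      n = N ∧ ∀ i, l i + (i : ℕ) = s (σ i) := by
    intro σ n hn l hl hprod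
    rw [mem_finsuppAntidiag] at hl
    have hsum : ∑ i, l i = n := hl.1
    have hge : ∀ i : Fin (r + 1), s (σ i) ≤ l i + (i : ℕ) := by
      intro i
      by_contra hlt
      push_neg at hlt
      apply hprod
      apply Finset.prod_eq_zero (Finset.mem_univ i)
      rw [coeff_derivativeFun_iterate]
      have : PowerSeries.coeff (R := k) (l i + (i : ℕ)) (f (σ i)) = 0 := by
        apply PowerSeries.coeff_of_lt_order
        rw [hord (σ i)]
        exact_mod_cast hlt
      rw [this, mul_zero]
    have hsum2 : ∑ i, s (σ i) = ∑ i, s i := Equiv.sum_comp σ s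
    have hsum3 : ∑ i : Fin (r + 1), (l i + (i : ℕ)) = n + T := by
      rw [Finset.sum_add_distrib, hsum, hT']
    have hNn : N ≤ n := by
      have h := Finset.sum_le_sum (s := (univ : Finset (Fin (r + 1))))
        (f := fun i => s (σ i)) (g := fun i => l i + (i : ℕ)) (fun i _ => hge i)
      rw [hsum2, hsum3] at h
      omega
    have hnN : n = N := le_antisymm hn hNn
    refine ⟨hnN, ?_⟩
    have heq : (∑ i, s (σ i)) = ∑ i : Fin (r + 1), (l i + (i : ℕ)) := by
      rw [hsum2, hsum3, hnN, hNT]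
    have hptw := (Finset.sum_eq_sum_iff_of_le (s := (univ : Finset (Fin (r + 1))))
      (f := fun i => s (σ i)) (g := fun i => l i + (i : ℕ)) (fun i _ => hge i)).mp heq
    intro i
    exact (hptw i (Finset.mem_univ i)).symm
  -- key coefficient formula for each permutation
  have key : ∀ (σ : Equiv.Perm (Fin (r + 1))) (n : ℕ), n ≤ N →
      PowerSeries.coeff (R := k) n (∏ i : Fin (r + 1), (derivativeFun)^[(i : ℕ)] (f (σ i)))
        = if n = N then
            ∏ i : Fin (r + 1), (((s (σ i)).descFactorial i : k) * PowerSeries.coeff (R := k) (s (σ i)) (f (σ i)))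
          else 0 := by
    intro σ n hn
    rw [PowerSeries.coeff_prod]
    by_cases hnN : n = N
    · rw [if_pos hnN]
      by_cases hA : ∀ i : Fin (r + 1), (i : ℕ) ≤ s (σ i)
      · set l₀ : Fin (r + 1) →₀ ℕ :=
          Finsupp.equivFunOnFinite.symm (fun i => s (σ i) - (i : ℕ)) with hl₀def
        have hl₀app : ∀ i, l₀ i = s (σ i) - (i : ℕ) := fun i => rfl
        have hl₀mem : l₀ ∈ finsuppAntidiag (univ : Finset (Fin (r + 1))) n := by
          rw [mem_finsuppAntidiag]
          refine ⟨?_, Finset.subset_univ _⟩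
          show (∑ i, l₀ i) = n
          simp only [hl₀app]
          rw [Finset.sum_tsub_distrib (univ : Finset (Fin (r + 1))) (fun i _ => hA i),
            hT', Equiv.sum_comp σ s]
          omega
        rw [Finset.sum_eq_single_of_mem l₀ hl₀mem]
        · apply Finset.prod_congr rfl
          intro i _
          rw [coeff_derivativeFun_iterate]
          have h3 : l₀ i + (i : ℕ) = s (σ i) := by
            rw [hl₀app]
            have := hA i
            omega
          rw [h3]
        · intro l hl hne
          by_contra hprod
          obtain ⟨-, hptw⟩ := core σ n hn l hl hprod
          apply hne
          ext i
          have h4 := hptw i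
          rw [hl₀app]
          omega
      · push_neg at hA
        obtain ⟨i₀, hi₀⟩ := hA
        have hrhs : (∏ i : Fin (r + 1), (((s (σ i)).descFactorial i : k)
            * PowerSeries.coeff (R := k) (s (σ i)) (f (σ i)))) = 0 := by
          apply Finset.prod_eq_zero (Finset.mem_univ i₀)
          rw [Nat.descFactorial_eq_zero_iff_lt.mpr hi₀]
          simp
        rw [hrhs]
        apply Finset.sum_eq_zero
        intro l hl
        by_contra hprod
        obtain ⟨-, hptw⟩ := core σ n hn l hl hprod
        have h5 := hptw i₀
        omega
    · rw [if_neg hnN]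
      apply Finset.sum_eq_zero
      intro l hl
      by_contra hprod
      exact hnN (core σ n hn l hl hprod).1
  -- coefficient of the Wronskian
  have hWcoeff : ∀ n : ℕ, n ≤ N →
      PowerSeries.coeff (R := k) n (psWronskian r f)
        = if n = N then
            ((Matrix.of fun p q : Fin (r + 1) => ((s p).descFactorial q : k)).det
              * ∏ i, PowerSeries.coeff (R := k) (s i) (f i))
          else 0 := by
    intro n hn
    rw [psWronskian, Matrix.det_apply, map_sum]
    have step : ∀ σ : Equiv.Perm (Fin (r + 1)),
        PowerSeries.coeff (R := k) n (Equiv.Perm.sign σ •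
          ∏ i, (Matrix.of fun i j : Fin (r + 1) =>
            (derivativeFun)^[(j : ℕ)] (f i)) (σ i) i)
        = Equiv.Perm.sign σ • (if n = N then
            ∏ i : Fin (r + 1), (((s (σ i)).descFactorial i : k)
              * PowerSeries.coeff (R := k) (s (σ i)) (f (σ i))) else 0) := by
      intro σ
      rw [Units.smul_def, Units.smul_def, map_zsmul]
      congr 1
      exact key σ n hn
    rw [Finset.sum_congr rfl (fun σ _ => step σ)]
    by_cases hnN : n = N
    · rw [if_pos hnN]
      simp only [if_pos hnN]
      rw [Matrix.det_apply, Finset.sum_mul]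
      apply Finset.sum_congr rfl
      intro σ _
      rw [Units.smul_def, Units.smul_def, smul_mul_assoc]
      congr 1
      rw [Finset.prod_mul_distrib]
      congr 1
      exact Equiv.prod_comp σ (fun i => PowerSeries.coeff (R := k) (s i) (f i))
    · rw [if_neg hnN]
      simp only [if_neg hnN, smul_zero]
      exact Finset.sum_const_zero
  -- the descFactorial determinant is nonzero
  have hdet : (Matrix.of fun p q : Fin (r + 1) => ((s p).descFactorial q : k)).det ≠ 0 := by
    have hmat : (Matrix.of fun p q : Fin (r + 1) => ((s p).descFactorial q : k))
        = Matrix.of fun p q : Fin (r + 1) =>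
            (descPochhammer k (q : ℕ)).eval ((s p : k)) := by
      ext p q
      simp [descPochhammer_eval_eq_descFactorial]
    rw [hmat, ← Matrix.det_eval_matrixOfPolynomials_eq_det_vandermonde
        (fun p : Fin (r + 1) => (s p : k)) (fun q => descPochhammer k (q : ℕ))
        (fun q => descPochhammer_natDegree k (q : ℕ))
        (fun q => monic_descPochhammer k (q : ℕ))]
    rw [Matrix.det_vandermonde_ne_zero_iff]
    intro p q hpq
    exact hs.injective (Nat.cast_injective hpq)
  have hcN : PowerSeries.coeff (R := k) N (psWronskian r f) ≠ 0 := by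
    rw [hWcoeff N le_rfl, if_pos rfl]
    exact mul_ne_zero hdet (Finset.prod_ne_zero_iff.mpr fun i _ => ha i)
  have horder : (psWronskian r f).order = (N : ℕ∞) := by
    rw [PowerSeries.order_eq_nat]
    refine ⟨hcN, fun i hi => ?_⟩
    rw [hWcoeff i hi.le, if_neg hi.ne]
  constructor
  · intro h0
    exact hcN (by rw [h0]; simp)
  · rw [horder, ← hNT, Nat.cast_add]
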